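/- Let r ≥ 1 and let P = conv V be a polytope in ℝ^N of dimension at least r, where V is exactly the set of extreme points (vertices) of P, and assume the 1-skeleton of P is triangle-free: no three distinct vertices are pairwise adjacent (u, v adjacent meaning conv{u,v} is a face of P). Then for every function f : ℝ^N → ℝ continuous on P there exist r-1 edges conv{u_1,w_1}, …, conv{u_{r-1},w_{r-1}} of P whose vertex pairs {u_i, w_i} are pairwise disjoint, and a vertex v ∈ V distinct from all the u_i and w_i, such that f(v) ∈ f(conv{u_i, w_i}) for every i = 1, …, r-1. -/

import Mathlib

set_option linter.unusedSectionVars false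
set_option maxHeartbeats 1000000

open Set Relation Module RealInnerProductSpace

section Polytope

variable {E : Type*} [NormedAddCommGroup E] [InnerProductSpace ℝ E]
  [FiniteDimensional ℝ E] [DecidableEq E]

/-- Two vertices are adjacent: some linear functional attains its max over the polytope
precisely at `v` and `w`. -/
def VAdj (V : Finset E) (v w : E) : Prop :=
  v ∈ V ∧ w ∈ V ∧ v ≠ w ∧
    ∃ g : E →L[ℝ] ℝ, g v = g w ∧ ∀ u ∈ V, u ≠ v → u ≠ w → g u < g v

lemma argmax_hull (V T : Finset E) (g : E →L[ℝ] ℝ) (M : ℝ)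
    (hle : ∀ u ∈ V, g u ≤ M) (hTV : T ⊆ V) (hT : ∀ u ∈ V, (u ∈ T ↔ g u = M))
    (hne : T.Nonempty) :
    {x ∈ convexHull ℝ (V : Set E) | ∀ y ∈ convexHull ℝ (V : Set E), g y ≤ g x} =
      convexHull ℝ (T : Set E) := by
  classical
  have hPle : ∀ y ∈ convexHull ℝ (V : Set E), g y ≤ M := by
    intro y hy
    have : convexHull ℝ (V : Set E) ⊆ g ⁻¹' (Iic M) :=
      convexHull_min (fun u hu => hle u hu) ((convex_Iic M).linear_preimage g.toLinearMap)
    exact this hy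
  have hTval : ∀ x ∈ convexHull ℝ (T : Set E), g x = M := by
    intro x hx
    have h1 : convexHull ℝ (T : Set E) ⊆ g ⁻¹' (Icc M M) := by
      apply convexHull_min
      · intro u hu
        have := (hT u (hTV hu)).1 hu
        simp [this]
      · exact ((convex_Icc M M)).linear_preimage g.toLinearMap
    have := h1 hx
    simpa [Icc_self] using this
  apply Set.Subset.antisymm
  · rintro x ⟨hxP, hxmax⟩
    -- g x = M
    obtain ⟨t0, ht0⟩ := hne
    have ht0V : t0 ∈ V := hTV ht0
    have hgx : g x = M := by
      have h1 : g t0 ≤ g x := hxmax t0 (subset_convexHull ℝ _ ht0V)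
      have h2 : g t0 = M := (hT t0 ht0V).1 ht0
      have h3 : g x ≤ M := hPle x hxP
      linarith
    -- representation
    rw [Finset.convexHull_eq] at hxP
    obtain ⟨w, hw0, hw1, hx⟩ := hxP
    have hgsum : ∑ u ∈ V, w u * (M - g u) = 0 := by
      have hxval : g x = ∑ u ∈ V, w u * g u := by
        rw [← hx, Finset.centerMass_eq_of_sum_1 _ _ hw1, map_sum]
        simp [map_smul, smul_eq_mul]
      have : ∑ u ∈ V, w u * (M - g u) = (∑ u ∈ V, w u) * M - ∑ u ∈ V, w u * g u := by
        rw [Finset.sum_mul]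
        rw [← Finset.sum_sub_distrib]
        congr 1; ext u; ring
      rw [this, hw1, ← hxval, hgx]; ring
    have hzero : ∀ u ∈ V, u ∉ T → w u = 0 := by
      intro u hu huT
      have hnn : ∀ u ∈ V, 0 ≤ w u * (M - g u) := by
        intro u' hu'
        exact mul_nonneg (hw0 u' hu') (by linarith [hle u' hu'])
      have := (Finset.sum_eq_zero_iff_of_nonneg hnn).1 hgsum u hu
      have hlt : g u < M := lt_of_le_of_ne (hle u hu) (fun h => huT ((hT u hu).2 h))
      rcases mul_eq_zero.1 this with h | h
      · exact h
      · linarith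
    have hxT : x = T.centerMass w id := by
      rw [← hx]
      exact (Finset.centerMass_subset id hTV (fun u hu hut => hzero u hu hut)).symm
    have hsumT : ∑ u ∈ T, w u = 1 := by
      rw [← hw1]
      exact Finset.sum_subset hTV (fun u hu hut => hzero u hu hut)
    rw [hxT]
    exact T.centerMass_id_mem_convexHull (fun u hu => hw0 u (hTV hu)) (by rw [hsumT]; norm_num)
  · intro x hx
    refine ⟨convexHull_mono (by exact_mod_cast hTV) hx, ?_⟩
    intro y hy
    rw [hTval x hx]
    exact hPle y hy

lemma VAdj.isExposed {V : Finset E} {v w : E} (h : VAdj V v w) :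
    IsExposed ℝ (convexHull ℝ (V : Set E)) (convexHull ℝ {v, w}) := by
  classical
  obtain ⟨hv, hw, hne, g, hg, hstrict⟩ := h
  intro _
  refine ⟨g, ?_⟩
  have hle : ∀ u ∈ V, g u ≤ g v := by
    intro u hu
    by_cases h1 : u = v
    · simp [h1]
    by_cases h2 : u = w
    · simp [h2, ← hg]
    exact (hstrict u hu h1 h2).le
  have hT : ∀ u ∈ V, (u ∈ ({v, w} : Finset E) ↔ g u = g v) := by
    intro u hu
    simp only [Finset.mem_insert, Finset.mem_singleton]
    constructor
    · rintro (rfl | rfl) <;> simp [hg.symm]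
    · intro hgu
      by_contra hcon
      push_neg at hcon
      exact absurd hgu (ne_of_lt (hstrict u hu hcon.1 hcon.2))
  have := argmax_hull V {v, w} g (g v) hle
    (by intro u hu; rcases Finset.mem_insert.1 hu with rfl | hu
        · exact hv
        · simpa using Finset.mem_singleton.1 hu ▸ hw)
    hT ⟨v, by simp⟩
  have hset : (({v, w} : Finset E) : Set E) = ({v, w} : Set E) := by simp
  rw [← hset]
  exact this.symm

lemma subpolytope_vertices {V : Finset E}
    (hV : (V : Set E) = Set.extremePoints ℝ (convexHull ℝ (V : Set E)))
    {T : Finset E} (hTV : T ⊆ V) :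
    (T : Set E) = Set.extremePoints ℝ (convexHull ℝ (T : Set E)) := by
  apply Set.Subset.antisymm
  · intro t ht
    have htV : t ∈ (V : Set E) := by exact_mod_cast hTV ht
    have hext : t ∈ Set.extremePoints ℝ (convexHull ℝ (V : Set E)) := hV ▸ htV
    have hsub : convexHull ℝ (T : Set E) ⊆ convexHull ℝ (V : Set E) :=
      convexHull_mono (by exact_mod_cast hTV)
    have : t ∈ convexHull ℝ (T : Set E) := subset_convexHull ℝ _ ht
    exact inter_extremePoints_subset_extremePoints_of_subset hsub ⟨this, hext⟩
  · exact extremePoints_convexHull_subset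

lemma not_mem_hull_erase {V : Finset E}
    (hV : (V : Set E) = Set.extremePoints ℝ (convexHull ℝ (V : Set E)))
    {v : E} (hv : v ∈ V) : v ∉ convexHull ℝ ((V.erase v : Finset E) : Set E) := by
  classical
  intro hmem
  have hext : v ∈ Set.extremePoints ℝ (convexHull ℝ ((V.erase v : Finset E) : Set E)) := by
    have hsub : convexHull ℝ ((V.erase v : Finset E) : Set E) ⊆ convexHull ℝ (V : Set E) :=
      convexHull_mono (by exact_mod_cast Finset.erase_subset _ _)
    have hextV : v ∈ Set.extremePoints ℝ (convexHull ℝ (V : Set E)) := hV ▸ (by exact_mod_cast hv)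
    exact inter_extremePoints_subset_extremePoints_of_subset hsub ⟨hmem, hextV⟩
  have := extremePoints_convexHull_subset hext
  simp at this

lemma exists_inj_functional (A : Finset E) :
    ∃ χ : E →L[ℝ] ℝ, Set.InjOn χ (A : Set E) := by
  classical
  -- first: functionals not vanishing on a finite set of nonzero vectors
  have key : ∀ (C : Finset E), (∀ c ∈ C, c ≠ 0) → ∃ χ : E →L[ℝ] ℝ, ∀ c ∈ C, χ c ≠ 0 := by
    intro C
    induction C using Finset.induction_on with
    | empty => intro _; exact ⟨0, by simp⟩
    | @insert c₀ C hc₀C ih =>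
      intro hC
      obtain ⟨χ, hχ⟩ := ih (fun c hc => hC c (Finset.mem_insert_of_mem hc))
      have hc₀ : c₀ ≠ 0 := hC c₀ (Finset.mem_insert_self _ _)
      -- bad t values
      set bad : Finset ℝ := (insert c₀ C).image
        (fun c => - χ c / (innerSL ℝ c₀ c)) with hbad
      obtain ⟨t, ht⟩ := Infinite.exists_notMem_finset bad
      refine ⟨χ + t • innerSL ℝ c₀, ?_⟩
      intro c hc hzero
      simp only [ContinuousLinearMap.add_apply, ContinuousLinearMap.smul_apply,
        smul_eq_mul] at hzero
      by_cases hip : (innerSL ℝ c₀) c = 0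
      · rcases Finset.mem_insert.1 hc with rfl | hcC
        · rw [hip] at hzero
          simp only [innerSL_apply_apply] at hip
          exact hc₀ (inner_self_eq_zero.1 hip)
        · rw [hip] at hzero
          exact hχ c hcC (by linarith)
      · apply ht
        rw [hbad]
        apply Finset.mem_image.2
        refine ⟨c, hc, ?_⟩
        rw [div_eq_iff hip]
        linarith
  -- now injectivity
  set D : Finset E := ((A ×ˢ A).filter (fun p => p.1 ≠ p.2)).image (fun p => p.1 - p.2) with hD
  have hDnz : ∀ c ∈ D, c ≠ 0 := by
    intro c hc
    rw [hD] at hc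
    obtain ⟨p, hp, rfl⟩ := Finset.mem_image.1 hc
    have := (Finset.mem_filter.1 hp).2
    exact sub_ne_zero.2 this
  obtain ⟨χ, hχ⟩ := key D hDnz
  refine ⟨χ, ?_⟩
  intro x hx y hy hxy
  by_contra hne
  have hmem : x - y ∈ D := by
    rw [hD]
    exact Finset.mem_image.2 ⟨(x, y), Finset.mem_filter.2
      ⟨Finset.mem_product.2 ⟨by exact_mod_cast hx, by exact_mod_cast hy⟩, hne⟩, rfl⟩
  exact hχ _ hmem (by rw [map_sub, hxy, sub_self])

lemma exists_improving {V : Finset E}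
    (hV : (V : Set E) = Set.extremePoints ℝ (convexHull ℝ (V : Set E)))
    {v : E} (hv : v ∈ V) (ℓ : E →L[ℝ] ℝ) (h : ∃ u ∈ V, ℓ v < ℓ u) :
    ∃ w, VAdj V v w ∧ ℓ v < ℓ w := by
  classical
  obtain ⟨u₀, hu₀V, hu₀⟩ := h
  have hu₀v : u₀ ≠ v := fun h => by subst h; exact lt_irrefl _ hu₀
  set W : Finset E := V.erase v with hWdef
  have hu₀W : u₀ ∈ W := Finset.mem_erase.2 ⟨hu₀v, hu₀V⟩
  have hWne : W.Nonempty := ⟨u₀, hu₀W⟩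
  have hWV : W ⊆ V := Finset.erase_subset _ _
  -- separation
  have hclosed : IsClosed (convexHull ℝ (W : Set E)) :=
    (W.finite_toSet.isCompact_convexHull ℝ).isClosed
  have hvnot : v ∉ convexHull ℝ (W : Set E) := not_mem_hull_erase hV hv
  obtain ⟨h₀, c₀, hlt, hgt⟩ :=
    geometric_hahn_banach_closed_point (convex_convexHull ℝ _) hclosed hvnot
  set q : E → ℝ := fun u => h₀ v - h₀ u with hqdef
  have hq : ∀ u ∈ W, 0 < q u := by
    intro u hu
    have := hlt u (subset_convexHull ℝ _ (by exact_mod_cast hu))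
    simp only [hqdef]
    linarith
  set dh : E → E := fun u => (q u)⁻¹ • (u - v) with hdh
  -- no two vertices on the same ray from v
  have hseg : ∀ u₁ ∈ W, ∀ u₂ ∈ W, ∀ s : ℝ, 0 < s → s ≤ 1 →
      u₁ - v = s • (u₂ - v) → u₁ = u₂ := by
    intro u₁ h1 u₂ h2 s hs0 hs1 heq
    have hu₁seg : u₁ ∈ segment ℝ v u₂ := by
      refine ⟨1 - s, s, by linarith, hs0.le, by ring, ?_⟩
      have : u₁ = v + s • (u₂ - v) := by
        rw [← heq]; abel
      rw [this, smul_sub]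
      module
    have hext : u₁ ∈ Set.extremePoints ℝ (convexHull ℝ (V : Set E)) := by
      rw [← hV]; exact_mod_cast hWV h1
    rw [mem_extremePoints_iff_forall_segment] at hext
    rcases hext.2 v (subset_convexHull ℝ _ (by exact_mod_cast hv))
      u₂ (subset_convexHull ℝ _ (by exact_mod_cast hWV h2)) hu₁seg with h | h
    · exact absurd h.symm (Finset.mem_erase.1 h1).1
    · exact h.symm
  have hdinj : Set.InjOn dh (W : Set E) := by
    intro u₁ h1 u₂ h2 heq
    have h1' : u₁ ∈ W := by exact_mod_cast h1
    have h2' : u₂ ∈ W := by exact_mod_cast h2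
    have hq1 := hq u₁ h1'
    have hq2 := hq u₂ h2'
    have heq2 : u₁ - v = (q u₁ / q u₂) • (u₂ - v) := by
      have := congrArg (fun x => (q u₁) • x) heq
      simp only [hdh] at this
      rw [smul_inv_smul₀ (ne_of_gt hq1)] at this
      rw [this, smul_smul, div_eq_mul_inv]
    set s := q u₁ / q u₂ with hs
    have hs0 : 0 < s := div_pos hq1 hq2
    rcases le_total s 1 with hs1 | hs1
    · exact hseg u₁ h1' u₂ h2' s hs0 hs1 heq2
    · have hs0' : 0 < s⁻¹ := inv_pos.2 hs0
      have hs1' : s⁻¹ ≤ 1 := by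
        rw [inv_le_one_iff₀]; right; exact hs1
      have heq3 : u₂ - v = s⁻¹ • (u₁ - v) := by
        rw [heq2, smul_smul, inv_mul_cancel₀ (ne_of_gt hs0), one_smul]
      exact (hseg u₂ h2' u₁ h1' s⁻¹ hs0' hs1' heq3).symm
  obtain ⟨χ, hχ⟩ := exists_inj_functional (W.image dh)
  set θ : E → ℝ := fun u => χ (dh u) with hθ
  set a : E → ℝ := fun u => (q u)⁻¹ * (ℓ u - ℓ v) with ha
  have ha₀ : 0 < a u₀ := mul_pos (inv_pos.2 (hq u₀ hu₀W)) (by linarith)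
  set B₁ : ℝ := (W.image (fun u => |θ u|)).max' (hWne.image _) with hB₁def
  have hB₁ : ∀ u ∈ W, |θ u| ≤ B₁ := by
    intro u hu
    apply Finset.le_max'
    exact Finset.mem_image_of_mem _ hu
  have hB₁0 : 0 ≤ B₁ := le_trans (abs_nonneg _) (hB₁ u₀ hu₀W)
  set ε₀ : ℝ := a u₀ / (2 * B₁ + 1) with hε₀def
  have hε₀pos : 0 < ε₀ := div_pos ha₀ (by linarith)
  set Bad : Finset ℝ := (W ×ˢ W).image (fun p => (a p.2 - a p.1) / (θ p.1 - θ p.2)) with hBad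
  obtain ⟨ε, hεmem, hεBad⟩ := (Set.Ioo_infinite hε₀pos).exists_notMem_finset Bad
  obtain ⟨hεpos, hεlt⟩ := hεmem
  set ρ : E → ℝ := fun u => a u + ε * θ u with hρ
  have hθinj : ∀ u₁ ∈ W, ∀ u₂ ∈ W, u₁ ≠ u₂ → θ u₁ ≠ θ u₂ := by
    intro u₁ h1 u₂ h2 hne heq
    apply hne
    apply hdinj (by exact_mod_cast h1) (by exact_mod_cast h2)
    apply hχ <;> try exact heq
    · exact_mod_cast Finset.mem_image_of_mem dh h1
    · exact_mod_cast Finset.mem_image_of_mem dh h2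
  have hρinj : ∀ u₁ ∈ W, ∀ u₂ ∈ W, u₁ ≠ u₂ → ρ u₁ ≠ ρ u₂ := by
    intro u₁ h1 u₂ h2 hne heq
    have hθne : θ u₁ - θ u₂ ≠ 0 := sub_ne_zero.2 (hθinj u₁ h1 u₂ h2 hne)
    apply hεBad
    rw [hBad]
    apply Finset.mem_image.2
    refine ⟨(u₁, u₂), Finset.mem_product.2 ⟨h1, h2⟩, ?_⟩
    show (a u₂ - a u₁) / (θ u₁ - θ u₂) = ε
    rw [div_eq_iff hθne]
    simp only [hρ] at heq
    ring_nf
    ring_nf at heq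
    linarith
  obtain ⟨w, hwW, hwmax⟩ := W.exists_max_image ρ hWne
  have hstrictρ : ∀ u ∈ W, u ≠ w → ρ u < ρ w :=
    fun u hu hne => lt_of_le_of_ne (hwmax u hu) (hρinj u hu w hwW hne)
  -- a w > 0
  have haw : 0 < a w := by
    have h1 : ρ u₀ ≤ ρ w := hwmax u₀ hu₀W
    have h2 : a u₀ - ε * B₁ ≤ ρ u₀ := by
      have := (abs_le.1 (hB₁ u₀ hu₀W)).1
      simp only [hρ]
      nlinarith
    have h3 : a w ≥ ρ w - ε * B₁ := by
      have := (abs_le.1 (hB₁ w hwW)).2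
      simp only [hρ]
      nlinarith
    have h4 : 2 * ε * B₁ < a u₀ := by
      have e1 : 2 * ε * B₁ ≤ 2 * ε₀ * B₁ := by nlinarith
      have e2 : 2 * ε₀ * B₁ < ε₀ * (2 * B₁ + 1) := by nlinarith
      have e3 : ε₀ * (2 * B₁ + 1) = a u₀ := by
        rw [hε₀def]; field_simp
      linarith
    linarith
  -- the exposing functional
  set g : E →L[ℝ] ℝ := ℓ + ε • χ + (ρ w) • h₀ with hg
  have hkey : ∀ u ∈ W, g u - g v = q u * (ρ u - ρ w) := by
    intro u hu
    have hqu := hq u hu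
    have e1 : q u * a u = ℓ u - ℓ v := by
      rw [ha]; field_simp
    have e2 : q u * θ u = ε⁻¹ * 0 + (χ u - χ v) := by
      simp only [hθ, hdh, map_smul, map_sub, smul_eq_mul]
      field_simp
      ring
    simp only [hg, ContinuousLinearMap.add_apply, ContinuousLinearMap.smul_apply, smul_eq_mul,
      hqdef, hρ] at *
    nlinarith [e1, e2]
  have hgvw : g v = g w := by
    have := hkey w hwW
    have : g w - g v = 0 := by rw [this]; ring
    linarith
  have hstrict : ∀ u ∈ V, u ≠ v → u ≠ w → g u < g v := by
    intro u hu huv huw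
    have huW : u ∈ W := Finset.mem_erase.2 ⟨huv, hu⟩
    have := hkey u huW
    have hneg : q u * (ρ u - ρ w) < 0 :=
      mul_neg_of_pos_of_neg (hq u huW) (by linarith [hstrictρ u huW huw])
    linarith
  have hwV : w ∈ V := hWV hwW
  have hvw : v ≠ w := fun h => (Finset.mem_erase.1 hwW).1 h.symm
  refine ⟨w, ⟨hv, hwV, hvw, g, hgvw, hstrict⟩, ?_⟩
  have hqw : q w ≠ 0 := ne_of_gt (hq w hwW)
  have : q w * a w = ℓ w - ℓ v := by
    rw [ha]; field_simp
  nlinarith [mul_pos (hq w hwW) haw]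

lemma face_vadj {V T : Finset E} (ℓ : E →L[ℝ] ℝ) (M : ℝ)
    (hle : ∀ u ∈ V, ℓ u ≤ M) (hTV : T ⊆ V) (hT : ∀ u ∈ V, (u ∈ T ↔ ℓ u = M))
    {a b : E} (h : VAdj T a b) : VAdj V a b := by
  classical
  obtain ⟨haT, hbT, hne, g, hg, hstrict⟩ := h
  by_cases hVT : V ⊆ T
  · exact ⟨hTV haT, hTV hbT, hne, g, hg, fun u hu => hstrict u (hVT hu)⟩
  -- gap
  have hWne : (V \ T).Nonempty := by
    obtain ⟨u, hu, hut⟩ := Set.not_subset.1 (fun hsub => hVT (fun x hx => hsub hx))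
    exact ⟨u, Finset.mem_sdiff.2 ⟨hu, hut⟩⟩
  set δ : ℝ := ((V \ T).image (fun u => M - ℓ u)).min' (hWne.image _) with hδdef
  have hδpos : 0 < δ := by
    rw [hδdef, Finset.lt_min'_iff]
    intro y hy
    obtain ⟨u, hu, rfl⟩ := Finset.mem_image.1 hy
    obtain ⟨huV, huT⟩ := Finset.mem_sdiff.1 hu
    have : ℓ u ≠ M := fun hM => huT ((hT u huV).2 hM)
    have := lt_of_le_of_ne (hle u huV) this
    linarith
  have hδle : ∀ u ∈ V \ T, δ ≤ M - ℓ u := by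
    intro u hu
    exact Finset.min'_le _ _ (Finset.mem_image_of_mem _ hu)
  set Gmax : ℝ := (V.image g).max' (by
    exact ⟨g a, Finset.mem_image_of_mem _ (hTV haT)⟩) with hGdef
  have hGmax : ∀ u ∈ V, g u ≤ Gmax := by
    intro u hu
    exact Finset.le_max' _ _ (Finset.mem_image_of_mem _ hu)
  set K : ℝ := max 0 ((Gmax - g a) / δ) + 1 with hKdef
  have hK0 : 0 < K := by
    have := le_max_left 0 ((Gmax - g a) / δ)
    rw [hKdef]; linarith
  have hKgt : Gmax - g a < K * δ := by
    have h1 : (Gmax - g a) / δ < K := by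
      have := le_max_right 0 ((Gmax - g a) / δ)
      rw [hKdef]; linarith
    calc Gmax - g a = (Gmax - g a) / δ * δ := by field_simp
    _ < K * δ := by exact mul_lt_mul_of_pos_right h1 hδpos
  have hla : ℓ a = M := (hT a (hTV haT)).1 haT
  have hlb : ℓ b = M := (hT b (hTV hbT)).1 hbT
  refine ⟨hTV haT, hTV hbT, hne, g + K • ℓ, ?_, ?_⟩
  · simp only [ContinuousLinearMap.add_apply, ContinuousLinearMap.smul_apply, smul_eq_mul,
      hla, hlb, hg]
  · intro u hu huv huw
    simp only [ContinuousLinearMap.add_apply, ContinuousLinearMap.smul_apply, smul_eq_mul, hla]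
    by_cases huT : u ∈ T
    · have := hstrict u huT huv huw
      have := (hT u hu).1 huT
      rw [this]
      linarith
    · have hgap := hδle u (Finset.mem_sdiff.2 ⟨hu, huT⟩)
      have h1 : K * δ ≤ K * (M - ℓ u) := mul_le_mul_of_nonneg_left hgap hK0.le
      have h2 : g u ≤ Gmax := hGmax u hu
      nlinarith

lemma walk_up {V : Finset E}
    (hV : (V : Set E) = Set.extremePoints ℝ (convexHull ℝ (V : Set E)))
    (ℓ : E →L[ℝ] ℝ) :
    ∀ v ∈ V, ∃ t, t ∈ V ∧ (∀ u ∈ V, ℓ u ≤ ℓ t) ∧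
      Relation.ReflTransGen (fun x y => VAdj V x y ∧ ℓ x < ℓ y) v t := by
  classical
  suffices H : ∀ n, ∀ v, v ∈ V → (V.filter (fun u => ℓ v < ℓ u)).card ≤ n →
      ∃ t, t ∈ V ∧ (∀ u ∈ V, ℓ u ≤ ℓ t) ∧
        Relation.ReflTransGen (fun x y => VAdj V x y ∧ ℓ x < ℓ y) v t by
    intro v hv
    exact H _ v hv le_rfl
  intro n
  induction n with
  | zero =>
    intro v hv hcard
    refine ⟨v, hv, ?_, Relation.ReflTransGen.refl⟩
    intro u hu
    by_contra hlt
    push_neg at hlt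
    have : u ∈ V.filter (fun u => ℓ v < ℓ u) := Finset.mem_filter.2 ⟨hu, hlt⟩
    rw [Finset.card_eq_zero.1 (Nat.le_zero.1 hcard)] at this
    simp at this
  | succ n ih =>
    intro v hv hcard
    by_cases hmax : ∀ u ∈ V, ℓ u ≤ ℓ v
    · exact ⟨v, hv, hmax, Relation.ReflTransGen.refl⟩
    push_neg at hmax
    obtain ⟨u₁, hu₁V, hu₁⟩ := hmax
    obtain ⟨w, hadj, hlt⟩ := exists_improving hV hv ℓ ⟨u₁, hu₁V, hu₁⟩
    have hwV : w ∈ V := hadj.2.1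
    have hss : V.filter (fun u => ℓ w < ℓ u) ⊂ V.filter (fun u => ℓ v < ℓ u) := by
      constructor
      · intro x hx
        obtain ⟨hxV, hxl⟩ := Finset.mem_filter.1 hx
        exact Finset.mem_filter.2 ⟨hxV, lt_trans hlt hxl⟩
      · intro hsub
        have : w ∈ V.filter (fun u => ℓ w < ℓ u) := hsub (Finset.mem_filter.2 ⟨hwV, hlt⟩)
        exact lt_irrefl _ (Finset.mem_filter.1 this).2
    have hcard' : (V.filter (fun u => ℓ w < ℓ u)).card ≤ n := by
      have := Finset.card_lt_card hss
      omega
    obtain ⟨t, htV, htmax, hwalk⟩ := ih w hwV hcard'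
    exact ⟨t, htV, htmax, Relation.ReflTransGen.head ⟨hadj, hlt⟩ hwalk⟩

lemma top_connect {V T : Finset E}
    (hV : (V : Set E) = Set.extremePoints ℝ (convexHull ℝ (V : Set E)))
    (ℓ : E →L[ℝ] ℝ) (M : ℝ)
    (hle : ∀ u ∈ V, ℓ u ≤ M) (hTV : T ⊆ V) (hT : ∀ u ∈ V, (u ∈ T ↔ ℓ u = M))
    {x y : E} (hx : x ∈ T) (hy : y ∈ T) :
    Relation.ReflTransGen (fun a b => VAdj V a b ∧ a ∈ T ∧ b ∈ T) x y := by
  classical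
  have hTpoly : (T : Set E) = Set.extremePoints ℝ (convexHull ℝ (T : Set E)) :=
    subpolytope_vertices hV hTV
  obtain ⟨χ, hχ⟩ := exists_inj_functional T
  -- both walk up to the unique χ-max vertex of T
  obtain ⟨tx, htxT, htxmax, hwalkx⟩ := walk_up hTpoly χ x hx
  obtain ⟨ty, htyT, htymax, hwalky⟩ := walk_up hTpoly χ y hy
  have htxy : tx = ty := by
    apply hχ (by exact_mod_cast htxT) (by exact_mod_cast htyT)
    have h1 := htxmax ty htyT
    have h2 := htymax tx htxT
    linarith
  have hmono : ∀ a b : E, (VAdj T a b ∧ χ a < χ b) →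
      (VAdj V a b ∧ a ∈ T ∧ b ∈ T) := by
    rintro a b ⟨hadj, _⟩
    exact ⟨face_vadj ℓ M hle hTV hT hadj, hadj.1, hadj.2.1⟩
  have hsymm : Symmetric (fun a b : E => VAdj V a b ∧ a ∈ T ∧ b ∈ T) := by
    rintro a b ⟨hadj, ha, hb⟩
    obtain ⟨h1, h2, h3, g, hg, hs⟩ := hadj
    exact ⟨⟨h2, h1, h3.symm, g, hg.symm, fun u hu hu1 hu2 => hg ▸ hs u hu hu2 hu1⟩, hb, ha⟩
  have wx := Relation.ReflTransGen.mono hmono _ _ hwalkx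
  have wy := Relation.ReflTransGen.mono hmono _ _ hwalky
  rw [htxy] at wx
  exact wx.trans ((@Relation.ReflTransGen.stdSymm _ _ ⟨fun a b h => hsymm h⟩).symm _ _ wy)

lemma degree_ge {V : Finset E} {r : ℕ}
    (hV : (V : Set E) = Set.extremePoints ℝ (convexHull ℝ (V : Set E)))
    (hdim : r ≤ Module.finrank ℝ (vectorSpan ℝ (V : Set E)))
    {v : E} (hv : v ∈ V) :
    ∃ Nv : Finset E, Nv ⊆ V ∧ r ≤ Nv.card ∧ ∀ u ∈ Nv, VAdj V v u := by
  classical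
  set Nv := V.filter (fun u => VAdj V v u) with hNv
  refine ⟨Nv, Finset.filter_subset _ _, ?_, fun u hu => (Finset.mem_filter.1 hu).2⟩
  set G : Finset E := Nv.image (fun u => u - v) with hG
  set S : Submodule ℝ E := Submodule.span ℝ (G : Set E) with hS
  have hWS : vectorSpan ℝ (V : Set E) ≤ S := by
    rw [vectorSpan_eq_span_vsub_set_right ℝ (show v ∈ (V : Set E) from hv)]
    apply Submodule.span_le.2
    rintro x ⟨u, hu, rfl⟩
    simp only [vsub_eq_sub]
    by_contra hnot
    set z : E := (u - v) - (S.orthogonalProjection (u - v) : E) with hz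
    have hzorth : z ∈ Sᗮ := Submodule.sub_starProjection_mem_orthogonal (K := S) (u - v)
    have hz0 : z ≠ 0 := by
      intro h0
      apply hnot
      have : u - v = (S.orthogonalProjection (u - v) : E) := by
        have := sub_eq_zero.1 (hz ▸ h0)
        exact this
      rw [this]
      exact Submodule.coe_mem _
    have hpos : 0 < (innerSL ℝ z) u - (innerSL ℝ z) v := by
      have h1 : (innerSL ℝ z) u - (innerSL ℝ z) v = ⟪z, u - v⟫ := by
        simp only [innerSL_apply_apply, inner_sub_right]
      have h2 : ⟪z, u - v⟫ = ⟪z, z⟫ + ⟪z, (S.orthogonalProjection (u - v) : E)⟫ := by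
        rw [← inner_add_right]
        congr 1
        rw [hz]; abel
      have h3 : ⟪z, (S.orthogonalProjection (u - v) : E)⟫ = 0 := by
        rw [real_inner_comm]
        exact hzorth _ (Submodule.coe_mem _)
      rw [h1, h2, h3]
      have := inner_self_eq_zero (𝕜 := ℝ) (x := z)
      have hpos2 : 0 < ⟪z, z⟫ := by
        rcases lt_or_eq_of_le (real_inner_self_nonneg (x := z)) with h | h
        · exact h
        · exact absurd (this.1 h.symm) hz0
      linarith
    obtain ⟨w, hadj, hlt⟩ := exists_improving hV hv (innerSL ℝ z) ⟨u, hu, by linarith⟩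
    have hwNv : w ∈ Nv := Finset.mem_filter.2 ⟨hadj.2.1, hadj⟩
    have hwS : w - v ∈ S := Submodule.subset_span (Finset.mem_coe.2 (Finset.mem_image_of_mem _ hwNv))
    have : ⟪z, w - v⟫ = 0 := by
      rw [real_inner_comm]
      exact hzorth _ hwS
    have : (innerSL ℝ z) w - (innerSL ℝ z) v = 0 := by
      simp only [innerSL_apply_apply]
      rw [← inner_sub_right]
      exact this
    linarith
  have h1 : r ≤ finrank ℝ S := le_trans hdim (Submodule.finrank_mono hWS)
  have h2 : finrank ℝ S ≤ G.card := by
    have h := finrank_span_finset_le_card (R := ℝ) G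
    have he : Set.finrank ℝ (G : Set E) = finrank ℝ S := rfl
    omega
  have h3 : G.card ≤ Nv.card := Finset.card_image_le
  omega

lemma walk_avoid {V : Finset E} {C : Finset E} (ℓ : E →L[ℝ] ℝ) {s t : E}
    (hsC : s ∉ C) (hC : ∀ c ∈ C, ℓ c ≤ ℓ s)
    (h : Relation.ReflTransGen (fun x y => VAdj V x y ∧ ℓ x < ℓ y) s t) :
    Relation.ReflTransGen (fun x y => VAdj V x y ∧ x ∉ C ∧ y ∉ C) s t ∧
      (s = t ∨ ℓ s < ℓ t) := by
  induction h with
  | refl => exact ⟨Relation.ReflTransGen.refl, Or.inl rfl⟩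
  | @tail x y hsx hxy ih =>
    obtain ⟨w1, w2⟩ := ih
    have hxs : ℓ s ≤ ℓ x := by
      rcases w2 with rfl | h
      · exact le_refl _
      · exact h.le
    have hxC : x ∉ C := by
      rcases w2 with rfl | h
      · exact hsC
      · intro hxC
        exact absurd (hC x hxC) (not_le.2 h)
    have hyC : y ∉ C := by
      intro hyC
      have := hC y hyC
      have := hxy.2
      linarith
    exact ⟨w1.tail ⟨hxy.1, hxC, hyC⟩, Or.inr (lt_of_le_of_lt hxs hxy.2)⟩

lemma stepC_symm {V C : Finset E} :
    Symmetric (fun x y : E => VAdj V x y ∧ x ∉ C ∧ y ∉ C) := by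
  rintro a b ⟨⟨h1, h2, h3, g, hg, hs⟩, ha, hb⟩
  exact ⟨⟨h2, h1, h3.symm, g, hg.symm, fun u hu hu1 hu2 => hg ▸ hs u hu hu2 hu1⟩, hb, ha⟩

/-- Balinski-type connectivity. -/

lemma balinski {V : Finset E} {r : ℕ}
    (hV : (V : Set E) = Set.extremePoints ℝ (convexHull ℝ (V : Set E)))
    (hdim : r ≤ Module.finrank ℝ (vectorSpan ℝ (V : Set E)))
    {C : Finset E} (hCV : C ⊆ V) (hCne : C.Nonempty) (hCcard : C.card < r)
    {s b : E} (hs : s ∈ V) (hb : b ∈ V) (hsC : s ∉ C) (hbC : b ∉ C) :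
    Relation.ReflTransGen (fun x y => VAdj V x y ∧ x ∉ C ∧ y ∉ C) s b := by
  classical
  obtain ⟨c₀, hc₀⟩ := hCne
  have hc₀V : c₀ ∈ V := hCV hc₀
  set Wsp := vectorSpan ℝ (V : Set E) with hWsp
  set U : Submodule ℝ E :=
    Submodule.span ℝ (((C.erase c₀).image (fun c => c - c₀) : Finset E) : Set E) with hU
  have hUC : ∀ c ∈ C, c - c₀ ∈ U := by
    intro c hc
    by_cases hcc : c = c₀
    · subst hcc; simp
    · exact Submodule.subset_span
        (Finset.mem_coe.2 (Finset.mem_image_of_mem _ (Finset.mem_erase.2 ⟨hcc, hc⟩)))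
  -- the common "main" connector
  have main : ∀ ℓ : E →L[ℝ] ℝ, (∀ c ∈ C, ℓ c = ℓ c₀) → (∃ u ∈ V, ℓ c₀ < ℓ u) →
      (ℓ c₀ ≤ ℓ s) → (ℓ c₀ ≤ ℓ b) →
      Relation.ReflTransGen (fun x y => VAdj V x y ∧ x ∉ C ∧ y ∉ C) s b := by
    intro ℓ hC0 hex hls hlb
    have hVne : V.Nonempty := ⟨s, hs⟩
    set M : ℝ := (V.image ℓ).max' (hVne.image _) with hM
    have hMle : ∀ u ∈ V, ℓ u ≤ M := by
      intro u hu
      exact Finset.le_max' _ _ (Finset.mem_image_of_mem _ hu)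
    have hMmem : ∃ m ∈ V, ℓ m = M := by
      obtain ⟨m, hm, hm2⟩ := Finset.mem_image.1 ((V.image ℓ).max'_mem (hVne.image _))
      exact ⟨m, hm, hm2⟩
    have hMgt : ℓ c₀ < M := by
      obtain ⟨u, hu, hu2⟩ := hex
      exact lt_of_lt_of_le hu2 (hMle u hu)
    set T : Finset E := V.filter (fun u => ℓ u = M) with hT
    have hTsub : T ⊆ V := Finset.filter_subset _ _
    have hTiff : ∀ u ∈ V, (u ∈ T ↔ ℓ u = M) := by
      intro u hu; simp [hT, hu]
    have hTC : ∀ x ∈ T, x ∉ C := by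
      intro x hx hxC
      have h1 : ℓ x = M := (Finset.mem_filter.1 hx).2
      have h2 : ℓ x = ℓ c₀ := hC0 x hxC
      linarith
    have reach : ∀ x, x ∈ V → x ∉ C → ℓ c₀ ≤ ℓ x →
        ∃ t ∈ T, Relation.ReflTransGen (fun x y => VAdj V x y ∧ x ∉ C ∧ y ∉ C) x t := by
      intro x hx hxC hlx
      obtain ⟨t, htV, htmax, hwalk⟩ := walk_up hV ℓ x hx
      have htT : t ∈ T := by
        apply (hTiff t htV).2
        obtain ⟨m, hm, hm2⟩ := hMmem
        exact le_antisymm (hMle t htV) (hm2 ▸ htmax m hm)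
      have := walk_avoid (C := C) ℓ hxC (fun c hc => le_trans (le_of_eq (hC0 c hc)) hlx) hwalk
      exact ⟨t, htT, this.1⟩
    obtain ⟨ts, htsT, hwalks⟩ := reach s hs hsC hls
    obtain ⟨tb, htbT, hwalkb⟩ := reach b hb hbC hlb
    have htop := top_connect hV ℓ M hMle hTsub hTiff htsT htbT
    have htop' : Relation.ReflTransGen (fun x y => VAdj V x y ∧ x ∉ C ∧ y ∉ C) ts tb := by
      apply Relation.ReflTransGen.mono _ _ _ htop
      rintro x y ⟨hadj, hxT, hyT⟩
      exact ⟨hadj, hTC x hxT, hTC y hyT⟩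
    exact (hwalks.trans htop').trans ((@Relation.ReflTransGen.stdSymm _ _ ⟨fun a b h => stepC_symm h⟩).symm _ _ hwalkb)
  -- dimension counting
  have hUdim : finrank ℝ U ≤ C.card - 1 := by
    have h1 := finrank_span_finset_le_card (R := ℝ) ((C.erase c₀).image (fun c => c - c₀))
    have he : Set.finrank ℝ (((C.erase c₀).image (fun c => c - c₀) : Finset E) : Set E)
        = finrank ℝ U := rfl
    have h2 : ((C.erase c₀).image (fun c => c - c₀)).card ≤ (C.erase c₀).card :=
      Finset.card_image_le
    have h3 : (C.erase c₀).card = C.card - 1 := Finset.card_erase_of_mem hc₀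
    omega
  have hnontrivial : ∀ z : E, z ∈ Wsp → z ≠ 0 → ∃ u ∈ V, (innerSL ℝ z) u ≠ (innerSL ℝ z) c₀ := by
    intro z hzW hz0
    by_contra hcon
    push_neg at hcon
    have hzperp : z ∈ Wspᗮ := by
      rw [hWsp, vectorSpan_eq_span_vsub_set_right ℝ (show c₀ ∈ (V : Set E) from hc₀V)]
      rw [Submodule.mem_orthogonal]
      intro x hx
      apply Submodule.span_induction (p := fun x _ => ⟪x, z⟫ = 0) ?_ ?_ ?_ ?_ hx
      · rintro y ⟨u, hu, rfl⟩
        simp only [vsub_eq_sub]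
        rw [real_inner_comm, inner_sub_right]
        have := hcon u hu
        simp only [innerSL_apply_apply] at this
        rw [this]
        ring
      · simp
      · intro a b _ _ h1 h2
        rw [inner_add_left, h1, h2]; ring
      · intro c a _ h1
        rw [inner_smul_left, h1]; simp
    have : ⟪z, z⟫ = 0 := by
      have := hzperp z hzW
      rwa [real_inner_comm] at this
    exact hz0 (inner_self_eq_zero.1 this)
  by_cases hsemi : ∃ z : E, z ∈ Wsp ⊓ Uᗮ ∧ z ≠ 0 ∧
      ∀ u ∈ V, (innerSL ℝ z) c₀ ≤ (innerSL ℝ z) u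
  · obtain ⟨z, hzK, hz0, hzpos⟩ := hsemi
    have hC0 : ∀ c ∈ C, (innerSL ℝ z) c = (innerSL ℝ z) c₀ := by
      intro c hc
      have := hzK.2 _ (hUC c hc)
      simp only [innerSL_apply_apply]
      have : ⟪c - c₀, z⟫ = 0 := this
      rw [real_inner_comm] at this
      rw [inner_sub_right] at this
      linarith
    have hex : ∃ u ∈ V, (innerSL ℝ z) c₀ < (innerSL ℝ z) u := by
      obtain ⟨u, hu, hne⟩ := hnontrivial z hzK.1 hz0
      exact ⟨u, hu, lt_of_le_of_ne (hzpos u hu) (Ne.symm hne)⟩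
    exact main _ hC0 hex (hzpos s hs) (hzpos b hb)
  · push_neg at hsemi
    -- choose z additionally orthogonal to s - c₀
    set K' : Submodule ℝ E := (Wsp ⊓ Uᗮ) ⊓ (Submodule.span ℝ {s - c₀})ᗮ with hK'
    have hK2 : 2 ≤ finrank ℝ ↥(Wsp ⊓ Uᗮ) := by
      have h1 := Submodule.finrank_sup_add_finrank_inf_eq Wsp Uᗮ
      have h2 := Submodule.finrank_add_finrank_orthogonal U
      have h3 : finrank ℝ ↥(Wsp ⊔ Uᗮ) ≤ finrank ℝ E := Submodule.finrank_le _
      have h4 : r ≤ finrank ℝ Wsp := hdim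
      have h5 : 1 ≤ C.card := Finset.card_pos.2 ⟨c₀, hc₀⟩
      omega
    have hK'1 : 1 ≤ finrank ℝ K' := by
      rw [hK']
      have h1 := Submodule.finrank_sup_add_finrank_inf_eq (Wsp ⊓ Uᗮ) (Submodule.span ℝ {s - c₀})ᗮ
      have h2 := Submodule.finrank_add_finrank_orthogonal (Submodule.span ℝ {s - c₀})
      have h3 : finrank ℝ ↥((Wsp ⊓ Uᗮ) ⊔ (Submodule.span ℝ {s - c₀})ᗮ) ≤ finrank ℝ E :=
        Submodule.finrank_le _
      have h4 : finrank ℝ (Submodule.span ℝ ({s - c₀} : Set E)) ≤ 1 := by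
        have h := finrank_span_finset_le_card (R := ℝ) ({s - c₀} : Finset E)
        have he : Set.finrank ℝ ((({s - c₀} : Finset E)) : Set E)
            = finrank ℝ (Submodule.span ℝ ((({s - c₀} : Finset E)) : Set E)) := rfl
        have he2 : ((({s - c₀} : Finset E)) : Set E) = ({s - c₀} : Set E) := by simp
        rw [he, he2] at h
        simpa using h
      omega
    have hK'ne : ∃ z, z ∈ K' ∧ z ≠ 0 := by
      rw [← Submodule.ne_bot_iff]
      intro h0
      rw [h0] at hK'1
      simp [finrank_bot] at hK'1
    obtain ⟨z, hzK', hz0⟩ := hK'ne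
    obtain ⟨hzK, hzs⟩ := hzK'
    have hC0 : ∀ c ∈ C, (innerSL ℝ z) c = (innerSL ℝ z) c₀ := by
      intro c hc
      have := hzK.2 _ (hUC c hc)
      have : ⟪c - c₀, z⟫ = 0 := this
      rw [real_inner_comm, inner_sub_right] at this
      simp only [innerSL_apply_apply]
      linarith
    have hls : (innerSL ℝ z) s = (innerSL ℝ z) c₀ := by
      have := hzs _ (Submodule.mem_span_singleton_self (s - c₀))
      have : ⟪s - c₀, z⟫ = 0 := this
      rw [real_inner_comm, inner_sub_right] at this
      simp only [innerSL_apply_apply]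
      linarith
    -- indefiniteness
    obtain ⟨um, humV, hum⟩ := hsemi z hzK hz0
    have hz0' : -z ≠ 0 := by simpa using hz0
    have hzK'' : -z ∈ Wsp ⊓ Uᗮ := Submodule.neg_mem _ hzK
    obtain ⟨up, hupV, hup⟩ := hsemi (-z) hzK'' hz0'
    have hup' : (innerSL ℝ z) c₀ < (innerSL ℝ z) up := by
      simp only [innerSL_apply_apply] at hup ⊢
      rw [inner_neg_left, inner_neg_left] at hup
      linarith
    by_cases hlb : (innerSL ℝ z) c₀ ≤ (innerSL ℝ z) b
    · exact main _ hC0 ⟨up, hupV, hup'⟩ (le_of_eq hls.symm) hlb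
    · push_neg at hlb
      have hC0' : ∀ c ∈ C, (-(innerSL ℝ z)) c = (-(innerSL ℝ z)) c₀ := by
        intro c hc
        simp only [ContinuousLinearMap.neg_apply]
        rw [hC0 c hc]
      have hex' : ∃ u ∈ V, (-(innerSL ℝ z)) c₀ < (-(innerSL ℝ z)) u := by
        refine ⟨um, humV, ?_⟩
        simp only [ContinuousLinearMap.neg_apply]
        linarith
      apply main _ hC0' hex'
      · simp only [ContinuousLinearMap.neg_apply]
        linarith [le_of_eq hls]
      · simp only [ContinuousLinearMap.neg_apply]
        linarith

lemma ivt_segment {x y : E} {f : E → ℝ} (hf : ContinuousOn f (segment ℝ x y)) {c : ℝ}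
    (h1 : f x ≤ c) (h2 : c ≤ f y) : c ∈ f '' segment ℝ x y := by
  set γ : ℝ → E := fun θ => x + θ • (y - x) with hγ
  have hγcont : Continuous γ := by
    apply Continuous.add continuous_const
    exact continuous_id.smul continuous_const
  have himg : γ '' (Set.Icc 0 1) = segment ℝ x y := (segment_eq_image' ℝ x y).symm
  have hmaps : Set.MapsTo γ (Set.Icc 0 1) (segment ℝ x y) := by
    rw [← himg]; exact Set.mapsTo_image _ _
  have hcont : ContinuousOn (f ∘ γ) (Set.Icc 0 1) := hf.comp hγcont.continuousOn hmaps
  have hivt := intermediate_value_Icc (zero_le_one (α := ℝ)) hcont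
  have hγ0 : γ 0 = x := by simp [hγ]
  have hγ1 : γ 1 = y := by simp [hγ]
  have hc : c ∈ Set.Icc ((f ∘ γ) 0) ((f ∘ γ) 1) := by
    simp only [Function.comp_apply, hγ0, hγ1]
    exact ⟨h1, h2⟩
  obtain ⟨θ, hθ, hθc⟩ := hivt hc
  exact ⟨γ θ, hmaps hθ, hθc⟩

lemma sort_lemma (V : Finset E) (f : E → ℝ) :
    ∀ k : ℕ, k ≤ V.card → ∃ A : Finset E, A ⊆ V ∧ A.card = k ∧
      ∀ a ∈ A, ∀ b ∈ V, b ∉ A → f a ≤ f b := by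
  intro k
  induction k with
  | zero => exact fun _ => ⟨∅, by simp, rfl, by simp⟩
  | succ k ih =>
    intro hk
    obtain ⟨A, hA, hAcard, hAprop⟩ := ih (le_trans (Nat.le_succ k) hk)
    have hne : (V \ A).Nonempty := by
      rw [← Finset.card_pos, Finset.card_sdiff_of_subset hA]
      omega
    obtain ⟨m, hm, hmmin⟩ := (V \ A).exists_min_image f hne
    obtain ⟨hmV, hmA⟩ := Finset.mem_sdiff.1 hm
    refine ⟨insert m A, ?_, ?_, ?_⟩
    · exact Finset.insert_subset hmV hA
    · rw [Finset.card_insert_of_notMem hmA, hAcard]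
    · intro a ha b hb hbA
      have hbA' : b ∉ A := fun h => hbA (Finset.mem_insert_of_mem h)
      have hbm : b ≠ m := fun h => hbA (h ▸ Finset.mem_insert_self m A)
      rcases Finset.mem_insert.1 ha with rfl | haA
      · exact hmmin b (Finset.mem_sdiff.2 ⟨hb, hbA'⟩)
      · exact hAprop a haA b hb hbA'

end Polytope

/-- Refined Tverberg theorem for triangle-free polytopes, `d = 1`: let `P = conv V` be a
polytope of dimension at least `r` whose vertex set is `V` and whose 1-skeleton is
triangle-free.  Then for every `f : ℝ^N → ℝ` continuous on `P` there are `r-1` edges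
`conv{u_i, w_i}` of `P` with pairwise disjoint vertex pairs, and a vertex `v` distinct
from all `u_i, w_i`, such that `f v ∈ f(conv{u_i, w_i})` for every `i`. -/
theorem tverberg_triangle_free_polytope_edges (r N : ℕ) (hr : 1 ≤ r)
    (V : Finset (EuclideanSpace ℝ (Fin N)))
    (hdim : r ≤
      Module.finrank ℝ (affineSpan ℝ (V : Set (EuclideanSpace ℝ (Fin N)))).direction)
    (hvert : (V : Set (EuclideanSpace ℝ (Fin N))) =
      Set.extremePoints ℝ (convexHull ℝ (V : Set (EuclideanSpace ℝ (Fin N)))))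
    (htrianglefree : ¬ ∃ u ∈ V, ∃ v ∈ V, ∃ w ∈ V, u ≠ v ∧ u ≠ w ∧ v ≠ w ∧
      IsExposed ℝ (convexHull ℝ (V : Set (EuclideanSpace ℝ (Fin N))))
        (convexHull ℝ {u, v}) ∧
      IsExposed ℝ (convexHull ℝ (V : Set (EuclideanSpace ℝ (Fin N))))
        (convexHull ℝ {u, w}) ∧
      IsExposed ℝ (convexHull ℝ (V : Set (EuclideanSpace ℝ (Fin N))))
        (convexHull ℝ {v, w}))
    (f : EuclideanSpace ℝ (Fin N) → ℝ)
    (hf : ContinuousOn f (convexHull ℝ (V : Set (EuclideanSpace ℝ (Fin N))))) :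
    ∃ u w : Fin (r - 1) → EuclideanSpace ℝ (Fin N), ∃ v : EuclideanSpace ℝ (Fin N),
      (∀ i, u i ∈ V) ∧ (∀ i, w i ∈ V) ∧ (∀ i, u i ≠ w i) ∧
      (∀ i, IsExposed ℝ (convexHull ℝ (V : Set (EuclideanSpace ℝ (Fin N))))
        (convexHull ℝ {u i, w i})) ∧
      Pairwise (Function.onFun Disjoint
        (fun i => ({u i, w i} : Set (EuclideanSpace ℝ (Fin N))))) ∧
      v ∈ V ∧ (∀ i, v ≠ u i ∧ v ≠ w i) ∧
      (∀ i, f v ∈ f '' convexHull ℝ {u i, w i}) := by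
  classical
  let Ee := EuclideanSpace ℝ (Fin N)
  -- dimension in terms of vectorSpan
  have hdim' : r ≤ Module.finrank ℝ (vectorSpan ℝ (V : Set Ee)) := by
    rwa [direction_affineSpan] at hdim
  -- triangle-freeness at the VAdj level
  have htf : ∀ x y z : Ee, VAdj V x y → VAdj V x z → VAdj V y z → False := by
    intro x y z h1 h2 h3
    exact htrianglefree ⟨x, h1.1, y, h1.2.1, z, h2.2.1, h1.2.2.1, h2.2.2.1, h3.2.2.1,
      h1.isExposed, h2.isExposed, h3.isExposed⟩
  -- V is nonempty
  have hVne : V.Nonempty := by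
    by_contra h
    rw [Finset.not_nonempty_iff_eq_empty] at h
    subst h
    have h0 : vectorSpan ℝ ((∅ : Finset (EuclideanSpace ℝ (Fin N))) : Set (EuclideanSpace ℝ (Fin N))) = ⊥ := by
      rw [Finset.coe_empty, vectorSpan_def]
      simp
    rw [h0, finrank_bot] at hdim'
    omega
  -- |V| ≥ 2r
  have hV2r : 2 * r ≤ V.card := by
    obtain ⟨v0, hv0⟩ := hVne
    obtain ⟨Nv, hNvV, hNvcard, hNvadj⟩ := degree_ge hvert hdim' hv0
    have hNvne : Nv.Nonempty := Finset.card_pos.1 (by omega)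
    obtain ⟨u0, hu0⟩ := hNvne
    have hadj0 : VAdj V v0 u0 := hNvadj u0 hu0
    obtain ⟨Nu, hNuV, hNucard, hNuadj⟩ := degree_ge hvert hdim' hadj0.2.1
    have hdisj : Disjoint Nv Nu := by
      rw [Finset.disjoint_left]
      intro x hxv hxu
      exact htf v0 u0 x hadj0 (hNvadj x hxv) (hNuadj x hxu)
    have := Finset.card_union_of_disjoint hdisj
    have hsub : Nv ∪ Nu ⊆ V := Finset.union_subset hNvV hNuV
    have := Finset.card_le_card hsub
    omega
  -- select the r smallest vertices
  obtain ⟨A', hA'V, hA'card, hA'prop⟩ := sort_lemma V f r (by omega)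
  have hA'ne : A'.Nonempty := Finset.card_pos.1 (by omega)
  obtain ⟨v, hvA', hvmax⟩ := A'.exists_max_image f hA'ne
  have hvV : v ∈ V := hA'V hvA'
  set A : Finset Ee := A'.erase v with hA
  have hAcard : A.card = r - 1 := by rw [hA, Finset.card_erase_of_mem hvA', hA'card]
  have hAA' : A ⊆ A' := Finset.erase_subset _ _
  have hAV : A ⊆ V := hAA'.trans hA'V
  set B : Finset Ee := V \ A' with hB
  have hBV : B ⊆ V := Finset.sdiff_subset
  have hBcard : r ≤ B.card := by
    rw [hB, Finset.card_sdiff_of_subset hA'V, hA'card]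
    omega
  have hAv : ∀ a ∈ A, f a ≤ f v := fun a ha => hvmax a (hAA' ha)
  have hvB : ∀ b' ∈ B, f v ≤ f b' := by
    intro b' hb'
    obtain ⟨hb'V, hb'A'⟩ := Finset.mem_sdiff.1 hb'
    exact hA'prop v hvA' b' hb'V hb'A'
  -- Hall's condition
  set t : {x : Ee // x ∈ A} → Finset Ee := fun a => B.filter (fun u => VAdj V (↑a) u) with ht
  have hall : ∀ s : Finset {x : Ee // x ∈ A}, s.card ≤ (s.biUnion t).card := by
    intro s
    by_contra hcon
    push_neg at hcon
    have hsne : s.Nonempty := by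
      rw [← Finset.card_pos]; omega
    set S : Finset Ee := s.image Subtype.val with hS
    have hScard : S.card = s.card := Finset.card_image_of_injective _ Subtype.val_injective
    have hSA : S ⊆ A := by
      intro x hx
      obtain ⟨a, _, rfl⟩ := Finset.mem_image.1 hx
      exact a.2
    set NB : Finset Ee := s.biUnion t with hNB
    have hNBB : NB ⊆ B := by
      intro x hx
      obtain ⟨a, _, hx⟩ := Finset.mem_biUnion.1 hx
      exact Finset.filter_subset _ _ hx
    set C : Finset Ee := (A \ S) ∪ NB ∪ {v} with hC
    have hCV : C ⊆ V := by
      intro x hx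
      rcases Finset.mem_union.1 hx with hx | hx
      · rcases Finset.mem_union.1 hx with hx | hx
        · exact hAV (Finset.mem_sdiff.1 hx).1
        · exact hBV (hNBB hx)
      · rw [Finset.mem_singleton.1 hx]; exact hvV
    have hCne : C.Nonempty := ⟨v, Finset.mem_union.2 (Or.inr (Finset.mem_singleton_self v))⟩
    have hCcard : C.card < r := by
      have h1 : C.card ≤ (A \ S).card + NB.card + 1 := by
        calc C.card ≤ ((A \ S) ∪ NB).card + ({v} : Finset Ee).card := Finset.card_union_le _ _
        _ ≤ (A \ S).card + NB.card + 1 := by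
            have := Finset.card_union_le (A \ S) NB
            simp only [Finset.card_singleton]
            omega
      have h2 : (A \ S).card = A.card - S.card := Finset.card_sdiff_of_subset hSA
      have h3 : S.card ≤ A.card := Finset.card_le_card hSA
      have h4 : 1 ≤ s.card := Finset.card_pos.2 hsne
      omega
    obtain ⟨a₀, ha₀⟩ := hsne
    set s₀ : Ee := ↑a₀ with hs₀
    have hs₀S : s₀ ∈ S := Finset.mem_image_of_mem _ ha₀
    have hs₀A : s₀ ∈ A := a₀.2
    have hs₀V : s₀ ∈ V := hAV hs₀A
    have hs₀C : s₀ ∉ C := by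
      intro hx
      rcases Finset.mem_union.1 hx with hx | hx
      · rcases Finset.mem_union.1 hx with hx | hx
        · exact (Finset.mem_sdiff.1 hx).2 hs₀S
        · exact (Finset.mem_sdiff.1 (hNBB hx)).2 (hAA' hs₀A)
      · rw [Finset.mem_singleton.1 hx] at hs₀A
        exact (Finset.notMem_erase v A') hs₀A
    have hBNB : (B \ NB).Nonempty := by
      rw [← Finset.card_pos, Finset.card_sdiff_of_subset hNBB]
      have : NB.card < s.card := hcon
      have : s.card ≤ A.card := hScard ▸ Finset.card_le_card hSA
      omega
    obtain ⟨b₀, hb₀⟩ := hBNB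
    obtain ⟨hb₀B, hb₀NB⟩ := Finset.mem_sdiff.1 hb₀
    have hb₀V : b₀ ∈ V := hBV hb₀B
    have hb₀A' : b₀ ∉ A' := (Finset.mem_sdiff.1 hb₀B).2
    have hb₀C : b₀ ∉ C := by
      intro hx
      rcases Finset.mem_union.1 hx with hx | hx
      · rcases Finset.mem_union.1 hx with hx | hx
        · exact hb₀A' (hAA' (Finset.mem_sdiff.1 hx).1)
        · exact hb₀NB hx
      · rw [Finset.mem_singleton.1 hx] at hb₀A'
        exact hb₀A' hvA'
    have hwalk := balinski hvert hdim' hCV hCne hCcard hs₀V hb₀V hs₀C hb₀C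
    -- every vertex reachable from s₀ avoiding C stays in S
    have key : ∀ x : Ee, Relation.ReflTransGen (fun x y => VAdj V x y ∧ x ∉ C ∧ y ∉ C) s₀ x →
        x ∈ S := by
      intro x hx
      induction hx with
      | refl => exact hs₀S
      | @tail p y hsp hstep ih =>
        obtain ⟨hadj, hpC, hyC⟩ := hstep
        have hpS : p ∈ S := ih
        have hyV : y ∈ V := hadj.2.1
        by_cases hyB : y ∈ B
        · exfalso
          obtain ⟨a, has, rfl⟩ := Finset.mem_image.1 hpS
          have : y ∈ NB := Finset.mem_biUnion.2 ⟨a, has, Finset.mem_filter.2 ⟨hyB, hadj⟩⟩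
          exact hyC (Finset.mem_union.2 (Or.inl (Finset.mem_union.2 (Or.inr this))))
        · have hyA' : y ∈ A' := by
            by_contra hyA'
            exact hyB (Finset.mem_sdiff.2 ⟨hyV, hyA'⟩)
          by_cases hyv : y = v
          · exact absurd (Finset.mem_union.2 (Or.inr (Finset.mem_singleton.2 hyv))) hyC
          · have hyA : y ∈ A := Finset.mem_erase.2 ⟨hyv, hyA'⟩
            by_cases hyS : y ∈ S
            · exact hyS
            · exact absurd (Finset.mem_union.2 (Or.inl (Finset.mem_union.2
                (Or.inl (Finset.mem_sdiff.2 ⟨hyA, hyS⟩))))) hyC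
    have : b₀ ∈ S := key b₀ hwalk
    exact hb₀A' (hAA' (hSA this))
  -- Hall's theorem
  obtain ⟨mtch, hminj, hmmem⟩ :=
    (Finset.all_card_le_biUnion_card_iff_exists_injective t).1 hall
  -- index the A vertices
  have e : Fin (r - 1) ≃ {x : Ee // x ∈ A} := (A.equivFinOfCardEq hAcard).symm
  set uu : Fin (r - 1) → Ee := fun i => ↑(e i) with huu
  set ww : Fin (r - 1) → Ee := fun i => mtch (e i) with hww
  have huuA : ∀ i, uu i ∈ A := fun i => (e i).2
  have hwwB : ∀ i, ww i ∈ B := fun i => Finset.filter_subset _ _ (hmmem (e i))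
  have hadj : ∀ i, VAdj V (uu i) (ww i) := fun i => (Finset.mem_filter.1 (hmmem (e i))).2
  have huuinj : Function.Injective uu := fun i j hij =>
    e.injective (Subtype.val_injective hij)
  have hwwinj : Function.Injective ww := fun i j hij => e.injective (hminj hij)
  have huw : ∀ i j, uu i ≠ ww j := by
    intro i j h
    have h1 : uu i ∈ A' := hAA' (huuA i)
    have h2 : ww j ∉ A' := (Finset.mem_sdiff.1 (hwwB j)).2
    exact h2 (h ▸ h1)
  refine ⟨uu, ww, v, fun i => hAV (huuA i), fun i => hBV (hwwB i), fun i => huw i i, ?_,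
    ?_, hvV, ?_, ?_⟩
  · exact fun i => (hadj i).isExposed
  · -- pairwise disjointness
    intro i j hij
    simp only [Function.onFun]
    rw [Set.disjoint_left]
    rintro x hx1 hx2
    rcases hx1 with rfl | hx1
    · rcases hx2 with h | h
      · exact hij (huuinj h)
      · exact huw i j (Set.mem_singleton_iff.1 h)
    · rw [Set.mem_singleton_iff.1 hx1] at hx2
      rcases hx2 with h | h
      · exact huw j i h.symm
      · exact hij (hwwinj (Set.mem_singleton_iff.1 h))
  · intro i
    constructor
    · intro h
      have hm := huuA i
      rw [← h] at hm
      exact Finset.notMem_erase v A' hm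
    · intro h
      apply (Finset.mem_sdiff.1 (hwwB i)).2
      rw [← h]
      exact hvA'
  · -- intermediate value
    intro i
    have hseg : convexHull ℝ ({uu i, ww i} : Set Ee) = segment ℝ (uu i) (ww i) :=
      convexHull_pair _ _
    rw [hseg]
    have hsub : segment ℝ (uu i) (ww i) ⊆ convexHull ℝ (V : Set Ee) := by
      rw [← hseg]
      apply convexHull_mono
      intro x hx
      rcases hx with rfl | hx
      · exact hAV (huuA i)
      · rw [Set.mem_singleton_iff.1 hx]
        exact hBV (hwwB i)
    exact ivt_segment (hf.mono hsub) (hAv _ (huuA i)) (hvB _ (hwwB i))
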